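/- Let ξ ∈ (-1, 0). The saddle point equation with ξ₁ = ξ₂ = ξ has two distinct solutions in (0, ∞) other than 1 if and only if -1 < ξ < -(1/2)√(1+2c). Moreover, when -1 < ξ < -(1/2)√(1+2c), there exists ω_c ∈ (1, ∞) such that the set of solutions of the saddle point equation in (0, ∞) is exactly {ω_c, 1/ω_c}, and Re g_ξ(ω_c) < 0 and Re g_ξ(1/ω_c) > 0. -/

import Mathlib

/-- `c = a/(1+a²)`. -/
noncomputable def cOf (a : ℝ) : ℝ := a / (1 + a ^ 2)

/-- The branch of the logarithm with argument in `(-π/2, 3π/2]`: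
`L(z) = Log(-iz) + iπ/2` where `Log` is the principal branch. -/
noncomputable def Lbr (z : ℂ) : ℂ :=
  Complex.log (-Complex.I * z) + Complex.I * ((Real.pi : ℂ) / 2)

/-- The branch `√(ω² + 2c) = exp((1/2)L(ω + i√(2c)) + (1/2)L(ω - i√(2c)))`. -/
noncomputable def sqBr (a : ℝ) (ω : ℂ) : ℂ :=
  Complex.exp ((1 / 2 : ℂ) * Lbr (ω + Complex.I * (Real.sqrt (2 * cOf a) : ℂ)) +
    (1 / 2 : ℂ) * Lbr (ω - Complex.I * (Real.sqrt (2 * cOf a) : ℂ)))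

/-- `G(ω) = (ω - √(ω² + 2c))/√(2c)`. -/
noncomputable def Gbr (a : ℝ) (ω : ℂ) : ℂ :=
  (ω - sqBr a ω) / (Real.sqrt (2 * cOf a) : ℂ)

/-- The branch cuts `𝒞 = i·((-∞, -1/√(2c)] ∪ [-√(2c), √(2c)] ∪ [1/√(2c), ∞))`. -/
def cuts (a : ℝ) : Set ℂ :=
  {z : ℂ | ∃ t : ℝ, z = Complex.I * (t : ℂ) ∧
    (t ≤ -(1 / Real.sqrt (2 * cOf a)) ∨
      (-Real.sqrt (2 * cOf a) ≤ t ∧ t ≤ Real.sqrt (2 * cOf a)) ∨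
      1 / Real.sqrt (2 * cOf a) ≤ t)}

/-- The branch of the logarithm with argument in `(0, 2π]`: `L₃(z) = Log(-z) + iπ`. -/
noncomputable def L3 (z : ℂ) : ℂ := Complex.log (-z) + Complex.I * (Real.pi : ℂ)

/-- The saddle point function `g_ξ(ω) = L(ω) - ξ·L(G(ω)) + ξ·L₃(G(1/ω))`. -/
noncomputable def gxi (a ξ : ℝ) (ω : ℂ) : ℂ :=
  Lbr ω - (ξ : ℂ) * Lbr (Gbr a ω) + (ξ : ℂ) * L3 (Gbr a ω⁻¹)

/-- The saddle point equation `1 + ξ₁·ω/√(ω²+2c) + ξ₂/(ω·√(ω⁻²+2c)) = 0`. -/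
def saddleEq (a ξ₁ ξ₂ : ℝ) (ω : ℂ) : Prop :=
  1 + (ξ₁ : ℂ) * ω / sqBr a ω + (ξ₂ : ℂ) / (ω * sqBr a ω⁻¹) = 0

/-! ### Auxiliary real functions -/

/-- `f(t) = t/√(t²+2c) + 1/√(1+2ct²)`. -/
noncomputable def fcSt (c t : ℝ) : ℝ :=
  t / Real.sqrt (t ^ 2 + 2 * c) + 1 / Real.sqrt (1 + 2 * c * t ^ 2)

/-- `g(t) = (√(t²+2c) - t)/√(2c) = |G(t)|`. -/
noncomputable def gcSt (c t : ℝ) : ℝ :=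
  (Real.sqrt (t ^ 2 + 2 * c) - t) / Real.sqrt (2 * c)

/-- `h(t) = Re g_ξ(t)` for `t > 0`. -/
noncomputable def hRSt (ξ c t : ℝ) : ℝ :=
  Real.log t - ξ * Real.log (gcSt c t) + ξ * Real.log (gcSt c t⁻¹)

lemma cOf_pos {a : ℝ} (ha : 0 < a) : 0 < cOf a := by
  unfold cOf; positivity

lemma cOf_lt_half {a : ℝ} (ha : 0 < a) (ha1 : a < 1) : cOf a < 1 / 2 := by
  unfold cOf
  rw [div_lt_div_iff₀ (by positivity) (by norm_num)]
  nlinarith [sq_nonneg (1 - a)]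

lemma t_lt_X {c : ℝ} (hc : 0 < c) (t : ℝ) : t < Real.sqrt (t ^ 2 + 2 * c) := by
  nlinarith [Real.sqrt_pos.2 (show (0:ℝ) < t ^ 2 + 2 * c by positivity),
    Real.sq_sqrt (show (0:ℝ) ≤ t ^ 2 + 2 * c by positivity), sq_nonneg t]

lemma gcSt_pos {c : ℝ} (hc : 0 < c) (t : ℝ) : 0 < gcSt c t :=
  div_pos (by linarith [t_lt_X hc t]) (Real.sqrt_pos.2 (by positivity))

lemma sqrt_inv_arg {c : ℝ} (hc : 0 < c) {t : ℝ} (ht : 0 < t) :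
    Real.sqrt (t⁻¹ ^ 2 + 2 * c) = Real.sqrt (1 + 2 * c * t ^ 2) / t := by
  have h : t⁻¹ ^ 2 + 2 * c = (1 + 2 * c * t ^ 2) / t ^ 2 := by field_simp
  rw [h, Real.sqrt_div (by positivity), Real.sqrt_sq ht.le]

lemma term1St (X t c : ℝ) (hX : 0 < X) (h2 : X ^ 2 = t ^ 2 + 2 * c) :
    (1 * X - t * (1 / (2 * X) * (2 * t))) / X ^ 2 = 2 * c / X ^ 3 := by
  have hne : X ≠ 0 := hX.ne'
  field_simp
  ring_nf
  linear_combination h2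

lemma term2St (Y t c : ℝ) (hY : 0 < Y) :
    (0 * Y - 1 * (1 / (2 * Y) * (2 * c * (2 * t)))) / Y ^ 2 = -(2 * c * t / Y ^ 3) := by
  have hne : Y ≠ 0 := hY.ne'
  field_simp
  ring

lemma fcSt_hasDerivAt {c : ℝ} (hc : 0 < c) (t : ℝ) :
    HasDerivAt (fcSt c)
      (2 * c / Real.sqrt (t ^ 2 + 2 * c) ^ 3
        - 2 * c * t / Real.sqrt (1 + 2 * c * t ^ 2) ^ 3) t := by
  have hX : 0 < Real.sqrt (t ^ 2 + 2 * c) := Real.sqrt_pos.2 (by positivity)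
  have hXsq : Real.sqrt (t ^ 2 + 2 * c) ^ 2 = t ^ 2 + 2 * c := Real.sq_sqrt (by positivity)
  have hY : 0 < Real.sqrt (1 + 2 * c * t ^ 2) := Real.sqrt_pos.2 (by positivity)
  have h1 : HasDerivAt (fun x : ℝ => x ^ 2 + 2 * c) (2 * t) t := by
    simpa using ((hasDerivAt_pow 2 t).add_const (2 * c))
  have hsX : HasDerivAt (fun x : ℝ => Real.sqrt (x ^ 2 + 2 * c))
      (1 / (2 * Real.sqrt (t ^ 2 + 2 * c)) * (2 * t)) t :=
    (Real.hasDerivAt_sqrt (by positivity)).comp t h1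
  have h2 : HasDerivAt (fun x : ℝ => 1 + 2 * c * x ^ 2) (2 * c * (2 * t)) t := by
    simpa [mul_comm, mul_assoc, mul_left_comm] using
      (((hasDerivAt_pow 2 t).const_mul (2 * c)).const_add 1)
  have hsY : HasDerivAt (fun x : ℝ => Real.sqrt (1 + 2 * c * x ^ 2))
      (1 / (2 * Real.sqrt (1 + 2 * c * t ^ 2)) * (2 * c * (2 * t))) t :=
    (Real.hasDerivAt_sqrt (by positivity)).comp t h2
  have hf1 : HasDerivAt (fun x : ℝ => x / Real.sqrt (x ^ 2 + 2 * c))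
      ((1 * Real.sqrt (t ^ 2 + 2 * c) -
        t * (1 / (2 * Real.sqrt (t ^ 2 + 2 * c)) * (2 * t))) /
        Real.sqrt (t ^ 2 + 2 * c) ^ 2) t :=
    (hasDerivAt_id t).div hsX hX.ne'
  have hf2 : HasDerivAt (fun x : ℝ => 1 / Real.sqrt (1 + 2 * c * x ^ 2))
      ((0 * Real.sqrt (1 + 2 * c * t ^ 2) -
        1 * (1 / (2 * Real.sqrt (1 + 2 * c * t ^ 2)) * (2 * c * (2 * t)))) /
        Real.sqrt (1 + 2 * c * t ^ 2) ^ 2) t :=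
    (hasDerivAt_const t (1:ℝ)).div hsY hY.ne'
  have := hf1.add hf2
  rw [term1St _ t c hX hXsq, term2St _ t c hY] at this
  have goal_eq : fcSt c = fun x : ℝ =>
      x / Real.sqrt (x ^ 2 + 2 * c) + 1 / Real.sqrt (1 + 2 * c * x ^ 2) := rfl
  rw [goal_eq]
  simpa [sub_eq_add_neg, one_div, Pi.add_def] using this

lemma fcSt_continuous {c : ℝ} (hc : 0 < c) : Continuous (fcSt c) :=
  continuous_iff_continuousAt.2 fun t => (fcSt_hasDerivAt hc t).continuousAt

lemma fcSt_deriv_neg {c : ℝ} (hc : 0 < c) (hc2 : c < 1 / 2) {t : ℝ} (ht : 1 < t):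
    2 * c / Real.sqrt (t ^ 2 + 2 * c) ^ 3
      - 2 * c * t / Real.sqrt (1 + 2 * c * t ^ 2) ^ 3 < 0 := by
  set X := Real.sqrt (t ^ 2 + 2 * c) with hXdef
  set Y := Real.sqrt (1 + 2 * c * t ^ 2) with hYdef
  have hX : 0 < X := Real.sqrt_pos.2 (by positivity)
  have hXsq : X ^ 2 = t ^ 2 + 2 * c := Real.sq_sqrt (by positivity)
  have hY : 0 < Y := Real.sqrt_pos.2 (by positivity)
  have hYsq : Y ^ 2 = 1 + 2 * c * t ^ 2 := Real.sq_sqrt (by positivity)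
  have ht0 : (0:ℝ) < t := by linarith
  have hkey : Y ^ 3 < t * X ^ 3 := by
    have hcube : (Y ^ 3) ^ 2 < (t * X ^ 3) ^ 2 := by
      have e1 : (Y ^ 3) ^ 2 = (1 + 2 * c * t ^ 2) ^ 3 := by
        rw [show (Y ^ 3) ^ 2 = (Y ^ 2) ^ 3 by ring, hYsq]
      have e2 : (t * X ^ 3) ^ 2 = t ^ 2 * (t ^ 2 + 2 * c) ^ 3 := by
        rw [show (t * X ^ 3) ^ 2 = t ^ 2 * (X ^ 2) ^ 3 by ring, hXsq]
      rw [e1, e2]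
      have hfact : t ^ 2 * (t ^ 2 + 2 * c) ^ 3 - (1 + 2 * c * t ^ 2) ^ 3 =
          (t ^ 2 - 1) * (t ^ 2 + 1) * (t ^ 4 + 1 + (6 * c - 8 * c ^ 3) * t ^ 2) := by
        ring
      have hcc : c ^ 2 < 1 / 4 := by nlinarith
      have h6c : 0 < 6 * c - 8 * c ^ 3 := by
        nlinarith [mul_lt_mul_of_pos_left hcc (show (0:ℝ) < 8 * c by positivity)]
      nlinarith [sq_nonneg t, mul_pos (mul_pos (show (0:ℝ) < t ^ 2 - 1 by nlinarith)
        (show (0:ℝ) < t ^ 2 + 1 by positivity))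
        (show (0:ℝ) < t ^ 4 + 1 + (6 * c - 8 * c ^ 3) * t ^ 2 by positivity)]
    exact lt_of_pow_lt_pow_left₀ 2 (by positivity) hcube
  rw [sub_neg, div_lt_div_iff₀ (by positivity) (by positivity)]
  nlinarith [hkey, mul_pos hX hY, pow_pos hX 3, pow_pos hY 3]

lemma fcSt_strictAntiOn {c : ℝ} (hc : 0 < c) (hc2 : c < 1 / 2) :
    StrictAntiOn (fcSt c) (Set.Ici 1) := by
  apply strictAntiOn_of_deriv_neg (convex_Ici 1) ((fcSt_continuous hc).continuousOn)
  intro t ht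
  rw [interior_Ici] at ht
  rw [(fcSt_hasDerivAt hc t).deriv]
  exact fcSt_deriv_neg hc hc2 ht

lemma fcSt_inv {c : ℝ} (hc : 0 < c) {t : ℝ} (ht : 0 < t) : fcSt c t⁻¹ = fcSt c t := by
  have h1 : Real.sqrt (t⁻¹ ^ 2 + 2 * c) = Real.sqrt (1 + 2 * c * t ^ 2) / t :=
    sqrt_inv_arg hc ht
  have h2 : Real.sqrt (1 + 2 * c * t⁻¹ ^ 2) = Real.sqrt (t ^ 2 + 2 * c) / t := by
    have h : 1 + 2 * c * t⁻¹ ^ 2 = (t ^ 2 + 2 * c) / t ^ 2 := by field_simp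
    rw [h, Real.sqrt_div (by positivity), Real.sqrt_sq ht.le]
  have hX : 0 < Real.sqrt (t ^ 2 + 2 * c) := Real.sqrt_pos.2 (by positivity)
  have hY : 0 < Real.sqrt (1 + 2 * c * t ^ 2) := Real.sqrt_pos.2 (by positivity)
  have hXne := hX.ne'
  have hYne := hY.ne'
  have htne := ht.ne'
  unfold fcSt
  rw [h1, h2]
  field_simp
  ring

lemma fcSt_lt_max {c : ℝ} (hc : 0 < c) (hc2 : c < 1 / 2) {t : ℝ} (ht : 0 < t)
    (hne : t ≠ 1) : fcSt c t < fcSt c 1 := by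
  rcases lt_or_gt_of_ne hne with h | h
  · have h1 : 1 < t⁻¹ := (one_lt_inv₀ ht).2 h
    calc fcSt c t = fcSt c t⁻¹ := (fcSt_inv hc ht).symm
    _ < fcSt c 1 := fcSt_strictAntiOn hc hc2 Set.self_mem_Ici (Set.mem_Ici.2 h1.le) h1
  · exact fcSt_strictAntiOn hc hc2 Set.self_mem_Ici (Set.mem_Ici.2 h.le) h

lemma log_gcSt_hasDerivAt {c : ℝ} (hc : 0 < c) (t : ℝ) :
    HasDerivAt (fun x => Real.log (gcSt c x)) (-(Real.sqrt (t ^ 2 + 2 * c))⁻¹) t := by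
  have hX : 0 < Real.sqrt (t ^ 2 + 2 * c) := Real.sqrt_pos.2 (by positivity)
  have hs : 0 < Real.sqrt (2 * c) := Real.sqrt_pos.2 (by positivity)
  have h1 : HasDerivAt (fun x : ℝ => x ^ 2 + 2 * c) (2 * t) t := by
    simpa using ((hasDerivAt_pow 2 t).add_const (2 * c))
  have hsX : HasDerivAt (fun x : ℝ => Real.sqrt (x ^ 2 + 2 * c))
      (1 / (2 * Real.sqrt (t ^ 2 + 2 * c)) * (2 * t)) t :=
    (Real.hasDerivAt_sqrt (by positivity)).comp t h1
  have hg : HasDerivAt (gcSt c)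
      ((1 / (2 * Real.sqrt (t ^ 2 + 2 * c)) * (2 * t) - 1) / Real.sqrt (2 * c)) t := by
    have := (hsX.sub (hasDerivAt_id t)).div_const (Real.sqrt (2 * c))
    have geq : gcSt c = fun x : ℝ =>
        (Real.sqrt (x ^ 2 + 2 * c) - x) / Real.sqrt (2 * c) := rfl
    rw [geq]
    simpa using this
  have hlog := (Real.hasDerivAt_log (gcSt_pos hc t).ne').comp t hg
  refine hlog.congr_deriv ?_
  have htX : t < Real.sqrt (t ^ 2 + 2 * c) := t_lt_X hc t
  have hne1 : Real.sqrt (t ^ 2 + 2 * c) - t ≠ 0 := by linarith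
  have hne2 : Real.sqrt (2 * c) ≠ 0 := hs.ne'
  unfold gcSt
  field_simp
  ring

lemma hRSt_hasDerivAt {c ξ : ℝ} (hc : 0 < c) {t : ℝ} (ht : 0 < t) :
    HasDerivAt (hRSt ξ c) ((1 + ξ * fcSt c t) / t) t := by
  have hX : 0 < Real.sqrt (t ^ 2 + 2 * c) := Real.sqrt_pos.2 (by positivity)
  have hY : 0 < Real.sqrt (1 + 2 * c * t ^ 2) := Real.sqrt_pos.2 (by positivity)
  have hYt : Real.sqrt (t⁻¹ ^ 2 + 2 * c) = Real.sqrt (1 + 2 * c * t ^ 2) / t :=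
    sqrt_inv_arg hc ht
  have h1 : HasDerivAt (fun x : ℝ => Real.log x) t⁻¹ t := Real.hasDerivAt_log ht.ne'
  have h2 := log_gcSt_hasDerivAt (c := c) hc t
  have h3 : HasDerivAt (fun x : ℝ => Real.log (gcSt c x⁻¹))
      (-(Real.sqrt (t⁻¹ ^ 2 + 2 * c))⁻¹ * -(t ^ 2)⁻¹) t :=
    (log_gcSt_hasDerivAt hc t⁻¹).comp t (hasDerivAt_inv ht.ne')
  have htot := (h1.sub (h2.const_mul ξ)).add (h3.const_mul ξ)
  have heq : hRSt ξ c = fun x : ℝ =>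
      Real.log x - ξ * Real.log (gcSt c x) + ξ * Real.log (gcSt c x⁻¹) := rfl
  rw [heq]
  refine htot.congr_deriv ?_
  rw [hYt]
  unfold fcSt
  field_simp
  ring

lemma hRSt_one {c ξ : ℝ} : hRSt ξ c 1 = 0 := by simp [hRSt]

lemma hRSt_inv {c ξ : ℝ} {t : ℝ} : hRSt ξ c t⁻¹ = -hRSt ξ c t := by
  unfold hRSt
  rw [inv_inv, Real.log_inv]
  ring

/-- `sqBr` on positive reals is the positive square root. -/
lemma sqBr_ofReal {a : ℝ} (ha : 0 < a) {t : ℝ} (ht : 0 < t) :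
    sqBr a (t : ℂ) = (Real.sqrt (t ^ 2 + 2 * cOf a) : ℂ) := by
  have hc : 0 < cOf a := cOf_pos ha
  set s := Real.sqrt (2 * cOf a) with hs_def
  have hs : 0 < s := Real.sqrt_pos.2 (by positivity)
  have hssq : s ^ 2 = 2 * cOf a := Real.sq_sqrt (by positivity)
  set z : ℂ := (s : ℂ) + (t : ℂ) * Complex.I with hz_def
  have hzim : z.im = t := by simp [hz_def]
  have hzim' : 0 < z.im := by rw [hzim]; exact ht
  have hargne : z.arg ≠ Real.pi := by
    intro h
    rw [Complex.arg_eq_pi_iff] at h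
    exact absurd h.2 (by rw [hzim]; exact ht.ne')
  have hw1 : -Complex.I * ((t : ℂ) + Complex.I * (s : ℂ)) = (starRingEnd ℂ) z := by
    have hconj : (starRingEnd ℂ) z = (s : ℂ) - (t : ℂ) * Complex.I := by
      simp [hz_def, map_add, map_mul, Complex.conj_I, Complex.conj_ofReal]
      ring
    rw [hconj]
    linear_combination (-(s : ℂ)) * Complex.I_sq
  have hw2 : -Complex.I * ((t : ℂ) - Complex.I * (s : ℂ)) = -z := by
    rw [hz_def]
    linear_combination ((s : ℂ)) * Complex.I_sq
  have habs : ‖z‖ = Real.sqrt (t ^ 2 + 2 * cOf a) := by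
    rw [hz_def, Complex.norm_add_mul_I]
    rw [show s ^ 2 + t ^ 2 = t ^ 2 + 2 * cOf a by rw [← hssq]; ring]
  have harg1 : ((starRingEnd ℂ) z).arg = -z.arg := by
    rw [Complex.arg_conj]
    simp [hargne]
  have harg2 : (-z).arg = z.arg - Real.pi := Complex.arg_neg_eq_arg_sub_pi_of_im_pos hzim'
  have habs1 : ‖(starRingEnd ℂ) z‖ = Real.sqrt (t ^ 2 + 2 * cOf a) := by
    rw [Complex.norm_conj, habs]
  have habs2 : ‖-z‖ = Real.sqrt (t ^ 2 + 2 * cOf a) := by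
    rw [norm_neg z, habs]
  have hE : (1 / 2 : ℂ) * Lbr ((t : ℂ) + Complex.I * (s : ℂ)) +
      (1 / 2 : ℂ) * Lbr ((t : ℂ) - Complex.I * (s : ℂ)) =
      ((Real.log (Real.sqrt (t ^ 2 + 2 * cOf a)) : ℝ) : ℂ) := by
    unfold Lbr
    rw [hw1, hw2]
    apply Complex.ext
    · simp [Complex.add_re, Complex.mul_re, Complex.log_re, Complex.log_im,
        habs, habs1, habs2, Complex.div_re]
      ring
    · simp [Complex.add_im, Complex.mul_im, Complex.log_re, Complex.log_im,
        harg1, harg2]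
      ring
  unfold sqBr
  rw [← hs_def, hE, ← Complex.ofReal_exp,
    Real.exp_log (Real.sqrt_pos.2 (by positivity))]

lemma Lbr_re (z : ℂ) : (Lbr z).re = Real.log ‖z‖ := by
  unfold Lbr
  have h1 : ‖-Complex.I * z‖ = ‖z‖ := by
    rw [norm_mul, norm_neg, Complex.norm_I, one_mul]
  rw [Complex.add_re, Complex.log_re, h1]
  simp [Complex.mul_re]

lemma L3_re (z : ℂ) : (L3 z).re = Real.log ‖z‖ := by
  unfold L3
  rw [Complex.add_re, Complex.log_re, norm_neg]
  simp [Complex.mul_re]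

lemma ofReal_inv_eq (t : ℝ) : ((t : ℂ))⁻¹ = ((t⁻¹ : ℝ) : ℂ) := by push_cast; ring

lemma Gbr_ofReal {a : ℝ} (ha : 0 < a) {t : ℝ} (ht : 0 < t) :
    Gbr a (t : ℂ) = ((-(gcSt (cOf a) t) : ℝ) : ℂ) := by
  unfold Gbr gcSt
  rw [sqBr_ofReal ha ht]
  push_cast
  ring

lemma saddleEq_iff_real {a ξ : ℝ} (ha : 0 < a) {t : ℝ} (ht : 0 < t) :
    saddleEq a ξ ξ (t : ℂ) ↔ 1 + ξ * fcSt (cOf a) t = 0 := by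
  have hc : 0 < cOf a := cOf_pos ha
  have hX : 0 < Real.sqrt (t ^ 2 + 2 * cOf a) := Real.sqrt_pos.2 (by positivity)
  have hY : 0 < Real.sqrt (1 + 2 * cOf a * t ^ 2) := Real.sqrt_pos.2 (by positivity)
  unfold saddleEq
  rw [ofReal_inv_eq, sqBr_ofReal ha ht, sqBr_ofReal ha (inv_pos.2 ht), sqrt_inv_arg hc ht]
  have key : (1 : ℂ) + (ξ : ℂ) * (t : ℂ) / ((Real.sqrt (t ^ 2 + 2 * cOf a) : ℝ) : ℂ) +
      (ξ : ℂ) / ((t : ℂ) * ((Real.sqrt (1 + 2 * cOf a * t ^ 2) / t : ℝ) : ℂ)) =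
      ((1 + ξ * fcSt (cOf a) t : ℝ) : ℂ) := by
    unfold fcSt
    have h1 : (Real.sqrt (t ^ 2 + 2 * cOf a) : ℂ) ≠ 0 := by
      exact_mod_cast hX.ne'
    have h2 : (Real.sqrt (1 + 2 * cOf a * t ^ 2) : ℂ) ≠ 0 := by
      exact_mod_cast hY.ne'
    have h3 : (t : ℂ) ≠ 0 := by exact_mod_cast ht.ne'
    push_cast
    field_simp
    ring
  rw [key, Complex.ofReal_eq_zero]

lemma gxi_re_eq {a ξ : ℝ} (ha : 0 < a) {t : ℝ} (ht : 0 < t) :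
    (gxi a ξ (t : ℂ)).re = hRSt ξ (cOf a) t := by
  have hc : 0 < cOf a := cOf_pos ha
  have hg1 : 0 < gcSt (cOf a) t := gcSt_pos hc t
  have hg2 : 0 < gcSt (cOf a) t⁻¹ := gcSt_pos hc t⁻¹
  unfold gxi
  rw [ofReal_inv_eq, Gbr_ofReal ha ht, Gbr_ofReal ha (inv_pos.2 ht)]
  rw [Complex.add_re, Complex.sub_re, Complex.re_ofReal_mul, Complex.re_ofReal_mul,
    Lbr_re, Lbr_re, L3_re, Complex.norm_real, Complex.norm_real, Complex.norm_real,
    Real.norm_eq_abs, Real.norm_eq_abs, Real.norm_eq_abs,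
    abs_of_pos ht, abs_neg, abs_neg, abs_of_pos hg1, abs_of_pos hg2]
  rfl

lemma exists_tc {c ξ : ℝ} (hc : 0 < c) (hξ1 : -1 < ξ) (hξ0 : ξ < 0)
    (hlt : 1 + ξ * fcSt c 1 < 0) : ∃ t : ℝ, 1 < t ∧ 1 + ξ * fcSt c t = 0 := by
  set m : ℝ := (-ξ)⁻¹ with hm_def
  have hξ0' : 0 < -ξ := by linarith
  have hm1 : 1 < m := by
    rw [hm_def]
    rw [lt_inv_comm₀ one_pos hξ0']
    linarith
  have hξm : ξ * m = -1 := by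
    rw [hm_def]
    field_simp [hξ0.ne]
  set s : ℝ := Real.sqrt (2 * c) with hs_def
  have hs : 0 < s := Real.sqrt_pos.2 (by positivity)
  set T : ℝ := max 2 (1 / (s * (m - 1)) + 1) with hT_def
  have hT1 : 1 < T := lt_of_lt_of_le one_lt_two (le_max_left _ _)
  have hT0 : 0 < T := lt_trans one_pos hT1
  have hbound : fcSt c T < m := by
    have hX : 0 < Real.sqrt (T ^ 2 + 2 * c) := Real.sqrt_pos.2 (by positivity)
    have hb1 : T / Real.sqrt (T ^ 2 + 2 * c) < 1 := (div_lt_one hX).2 (t_lt_X hc T)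
    have hsT : s * T ≤ Real.sqrt (1 + 2 * c * T ^ 2) := by
      have h1 : Real.sqrt (2 * c * T ^ 2) ≤ Real.sqrt (1 + 2 * c * T ^ 2) :=
        Real.sqrt_le_sqrt (by nlinarith)
      calc s * T = Real.sqrt (2 * c) * Real.sqrt (T ^ 2) := by
            rw [hs_def, Real.sqrt_sq hT0.le]
      _ = Real.sqrt (2 * c * T ^ 2) := (Real.sqrt_mul (by positivity) _).symm
      _ ≤ _ := h1
    have hb2 : 1 / Real.sqrt (1 + 2 * c * T ^ 2) ≤ 1 / (s * T) :=
      one_div_le_one_div_of_le (by positivity) hsT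
    have hb3 : 1 / (s * T) < m - 1 := by
      have hTge : 1 / (s * (m - 1)) + 1 ≤ T := le_max_right _ _
      have hm1' : 0 < m - 1 := by linarith
      have he : s * (m - 1) * (1 / (s * (m - 1))) = 1 := by
        field_simp
      rw [div_lt_iff₀ (by positivity)]
      nlinarith [mul_pos hs hm1']
    unfold fcSt
    linarith
  have hFT : 0 < 1 + ξ * fcSt c T := by
    have : ξ * m < ξ * fcSt c T := mul_lt_mul_of_neg_left hbound hξ0
    rw [hξm] at this
    linarith
  have hcont : ContinuousOn (fun t => 1 + ξ * fcSt c t) (Set.Icc 1 T) :=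
    (continuous_const.add (continuous_const.mul (fcSt_continuous hc))).continuousOn
  have hmem : (0 : ℝ) ∈ Set.Icc (1 + ξ * fcSt c 1) (1 + ξ * fcSt c T) :=
    ⟨hlt.le, hFT.le⟩
  obtain ⟨t, htmem, htval⟩ := intermediate_value_Icc hT1.le hcont hmem
  simp only at htval
  refine ⟨t, ?_, htval⟩
  rcases eq_or_lt_of_le htmem.1 with h | h
  · exfalso
    rw [← h] at htval
    linarith
  · exact h

/-- Let `ξ ∈ (-1, 0)`. The saddle point equation with `ξ₁ = ξ₂ = ξ` has
two distinct solutions in `(0, ∞)` other than `1` if and only if `-1 < ξ < -(1/2)√(1+2c)`.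
Moreover, when `-1 < ξ < -(1/2)√(1+2c)`, there exists `ω_c ∈ (1, ∞)` such that the set of
solutions of the saddle point equation in `(0, ∞)` is exactly `{ω_c, 1/ω_c}`, and
`Re g_ξ(ω_c) < 0` and `Re g_ξ(1/ω_c) > 0`. -/
theorem statement13 (a : ℝ) (ha0 : 0 < a) (ha1 : a < 1) (ξ : ℝ)
    (hξ1 : -1 < ξ) (hξ0 : ξ < 0) :
    ((∃ ω₁ ω₂ : ℂ, ω₁ ≠ ω₂ ∧ ω₁ ≠ 1 ∧ ω₂ ≠ 1 ∧
        (∃ t : ℝ, 0 < t ∧ ω₁ = (t : ℂ)) ∧ (∃ t : ℝ, 0 < t ∧ ω₂ = (t : ℂ)) ∧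
        saddleEq a ξ ξ ω₁ ∧ saddleEq a ξ ξ ω₂) ↔
      (-1 < ξ ∧ ξ < -(1 / 2) * Real.sqrt (1 + 2 * cOf a))) ∧
    (ξ < -(1 / 2) * Real.sqrt (1 + 2 * cOf a) →
      ∃ t : ℝ, 1 < t ∧
        {ω : ℂ | (∃ s : ℝ, 0 < s ∧ ω = (s : ℂ)) ∧ saddleEq a ξ ξ ω} =
          {(t : ℂ), ((t : ℂ))⁻¹} ∧
        (gxi a ξ (t : ℂ)).re < 0 ∧ 0 < (gxi a ξ ((t : ℂ)⁻¹)).re) := by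
  have hc : 0 < cOf a := cOf_pos ha0
  have hc2 : cOf a < 1 / 2 := cOf_lt_half ha0 ha1
  have hq : 0 < Real.sqrt (1 + 2 * cOf a) := Real.sqrt_pos.2 (by positivity)
  have hfc1 : fcSt (cOf a) 1 = 2 / Real.sqrt (1 + 2 * cOf a) := by
    unfold fcSt
    rw [show (1 : ℝ) ^ 2 + 2 * cOf a = 1 + 2 * cOf a by ring,
      show 1 + 2 * cOf a * (1 : ℝ) ^ 2 = 1 + 2 * cOf a by ring]
    rw [← add_div]
    norm_num
  have hq2 : Real.sqrt (1 + 2 * cOf a) * (2 / Real.sqrt (1 + 2 * cOf a)) = 2 := by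
    field_simp
  -- threshold equivalence
  have key1 : ξ < -(1 / 2) * Real.sqrt (1 + 2 * cOf a) ↔ 1 + ξ * fcSt (cOf a) 1 < 0 := by
    rw [hfc1]
    constructor
    · intro h
      nlinarith [mul_lt_mul_of_pos_right h (show (0:ℝ) < 2 / Real.sqrt (1 + 2 * cOf a)
        by positivity)]
    · intro h
      nlinarith [mul_lt_mul_of_pos_left h hq]
  -- main construction
  have hmain : ξ < -(1 / 2) * Real.sqrt (1 + 2 * cOf a) →
      ∃ t : ℝ, 1 < t ∧ 1 + ξ * fcSt (cOf a) t = 0 := fun hlt =>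
    exists_tc hc hξ1 hξ0 (key1.1 hlt)
  constructor
  · constructor
    · rintro ⟨ω₁, ω₂, hne, hne1, hne2, ⟨t₁, ht₁, rfl⟩, ⟨t₂, ht₂, rfl⟩, hs₁, hs₂⟩
      refine ⟨hξ1, key1.2 ?_⟩
      have ht₁1 : t₁ ≠ 1 := by
        intro h
        apply hne1
        rw [h]
        norm_num
      have hF : 1 + ξ * fcSt (cOf a) t₁ = 0 := (saddleEq_iff_real ha0 ht₁).1 hs₁
      have hltf : fcSt (cOf a) t₁ < fcSt (cOf a) 1 := fcSt_lt_max hc hc2 ht₁ ht₁1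
      have : ξ * fcSt (cOf a) 1 < ξ * fcSt (cOf a) t₁ := mul_lt_mul_of_neg_left hltf hξ0
      linarith
    · rintro ⟨-, hlt⟩
      obtain ⟨t, ht1, htF⟩ := hmain hlt
      have ht0 : 0 < t := lt_trans one_pos ht1
      have htinv0 : 0 < t⁻¹ := inv_pos.2 ht0
      have htinv1 : t⁻¹ < 1 := inv_lt_one_of_one_lt₀ ht1
      refine ⟨(t : ℂ), ((t : ℂ))⁻¹, ?_, ?_, ?_, ⟨t, ht0, rfl⟩,
        ⟨t⁻¹, htinv0, (ofReal_inv_eq t).symm ▸ rfl⟩, ?_, ?_⟩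
      · rw [ofReal_inv_eq]
        intro h
        rw [Complex.ofReal_inj] at h
        linarith [h ▸ htinv1]
      · intro h
        rw [show (1 : ℂ) = ((1 : ℝ) : ℂ) by norm_num, Complex.ofReal_inj] at h
        linarith [h ▸ ht1]
      · rw [ofReal_inv_eq]
        intro h
        rw [show (1 : ℂ) = ((1 : ℝ) : ℂ) by norm_num, Complex.ofReal_inj] at h
        linarith [h ▸ htinv1]
      · exact (saddleEq_iff_real ha0 ht0).2 htF
      · rw [ofReal_inv_eq]
        apply (saddleEq_iff_real ha0 htinv0).2
        rw [fcSt_inv hc ht0]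
        exact htF
  · intro hlt
    obtain ⟨t, ht1, htF⟩ := hmain hlt
    have ht0 : 0 < t := lt_trans one_pos ht1
    have htinv0 : 0 < t⁻¹ := inv_pos.2 ht0
    -- h(t) < 0
    have hneg : hRSt ξ (cOf a) t < 0 := by
      have hanti : StrictAntiOn (hRSt ξ (cOf a)) (Set.Icc 1 t) := by
        apply strictAntiOn_of_deriv_neg (convex_Icc 1 t)
        · intro x hx
          have hx0 : 0 < x := lt_of_lt_of_le one_pos hx.1
          exact ((hRSt_hasDerivAt hc hx0).continuousAt).continuousWithinAt
        · intro x hx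
          rw [interior_Icc] at hx
          have hx0 : 0 < x := lt_trans one_pos hx.1
          rw [(hRSt_hasDerivAt hc hx0).deriv]
          apply div_neg_of_neg_of_pos _ hx0
          have hfx : fcSt (cOf a) t < fcSt (cOf a) x :=
            fcSt_strictAntiOn hc hc2 (Set.mem_Ici.2 hx.1.le)
              (Set.mem_Ici.2 (le_of_lt (lt_trans hx.1 hx.2))) hx.2
          have : ξ * fcSt (cOf a) x < ξ * fcSt (cOf a) t := mul_lt_mul_of_neg_left hfx hξ0
          linarith
      have := hanti (Set.left_mem_Icc.2 ht1.le) (Set.right_mem_Icc.2 ht1.le) ht1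
      rw [hRSt_one] at this
      exact this
    refine ⟨t, ht1, ?_, ?_, ?_⟩
    · ext ω
      simp only [Set.mem_setOf_eq, Set.mem_insert_iff, Set.mem_singleton_iff]
      constructor
      · rintro ⟨⟨u, hu0, rfl⟩, hsad⟩
        have hFu : 1 + ξ * fcSt (cOf a) u = 0 := (saddleEq_iff_real ha0 hu0).1 hsad
        rcases lt_trichotomy u 1 with h | h | h
        · right
          have hu1 : 1 < u⁻¹ := (one_lt_inv₀ hu0).2 h
          have hFu' : 1 + ξ * fcSt (cOf a) u⁻¹ = 0 := by
            rw [fcSt_inv hc hu0]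
            exact hFu
          have heqf : fcSt (cOf a) u⁻¹ = fcSt (cOf a) t := by
            have h2 : ξ * fcSt (cOf a) u⁻¹ = ξ * fcSt (cOf a) t := by linarith
            exact mul_left_cancel₀ hξ0.ne h2
          have hut : u⁻¹ = t := (fcSt_strictAntiOn hc hc2).injOn
            (Set.mem_Ici.2 hu1.le) (Set.mem_Ici.2 ht1.le) heqf
          rw [show u = t⁻¹ by rw [← hut, inv_inv], ofReal_inv_eq]
        · exfalso
          rw [h] at hFu
          have := key1.1 hlt
          linarith
        · left
          have heqf : fcSt (cOf a) u = fcSt (cOf a) t := by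
            have h2 : ξ * fcSt (cOf a) u = ξ * fcSt (cOf a) t := by linarith
            exact mul_left_cancel₀ hξ0.ne h2
          have : u = t := (fcSt_strictAntiOn hc hc2).injOn
            (Set.mem_Ici.2 h.le) (Set.mem_Ici.2 ht1.le) heqf
          rw [this]
      · rintro (rfl | rfl)
        · exact ⟨⟨t, ht0, rfl⟩, (saddleEq_iff_real ha0 ht0).2 htF⟩
        · refine ⟨⟨t⁻¹, htinv0, ofReal_inv_eq t⟩, ?_⟩
          rw [ofReal_inv_eq]
          apply (saddleEq_iff_real ha0 htinv0).2
          rw [fcSt_inv hc ht0]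
          exact htF
    · rw [gxi_re_eq ha0 ht0]
      exact hneg
    · rw [ofReal_inv_eq, gxi_re_eq ha0 htinv0, hRSt_inv]
      linarith
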